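/- Let X be a countably κ-metrizable space with countable κ-metric ρ, and let P ⊆ RO(X) be a Q-admissible family. Then for each V ∈ P there exists an increasing sequence {V_n : n ∈ ω} ⊆ P of regular open sets with V = ⋃_n V_n and V_n ⊆ cl V_n ⊆ V_{n+1} ⊆ V for each n. -/
import Mathlib


open Set Topology

section Defs

variable {X : Type*}

/-- A set is regular closed if it equals the closure of its interior. -/
def IsRegClosed [TopologicalSpace X] (C : Set X) : Prop := closure (interior C) = C

/-- A set is regular open if it equals the interior of its closure. -/
def IsRegOpen [TopologicalSpace X] (V : Set X) : Prop := interior (closure V) = V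

/-- A countable κ-metric: axioms (K1)-(K3) and (K4_ω). -/
structure IsCountKappaMetric [TopologicalSpace X] (ρ : X → Set X → ℝ) : Prop where
  nonneg : ∀ x C, IsRegClosed C → 0 ≤ ρ x C
  k1 : ∀ x C, IsRegClosed C → (ρ x C = 0 ↔ x ∈ C)
  k2 : ∀ x C D, IsRegClosed C → IsRegClosed D → C ⊆ D → ρ x D ≤ ρ x C
  k3 : ∀ C, IsRegClosed C → Continuous fun x => ρ x C
  k4omega : ∀ C : ℕ → Set X, (∀ n, IsRegClosed (C n)) → (∀ n, C n ⊆ C (n + 1)) →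
    ∀ x, ρ x (closure (⋃ n, C n)) = ⨅ n, ρ x (C n)

/-- Axiom (K4): the infimum identity for arbitrary nonempty totally ordered
(by inclusion) families of regular closed sets. -/
def K4Chains [TopologicalSpace X] (ρ : X → Set X → ℝ) : Prop :=
  ∀ 𝒞 : Set (Set X), 𝒞.Nonempty → (∀ C ∈ 𝒞, IsRegClosed C) →
    (∀ C ∈ 𝒞, ∀ D ∈ 𝒞, C ⊆ D ∨ D ⊆ C) →
    ∀ x, ρ x (closure (⋃₀ 𝒞)) = sInf ((ρ x) '' 𝒞)

/-- A (full) κ-metric: axioms (K1)-(K4). -/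
structure IsKappaMetric [TopologicalSpace X] (ρ : X → Set X → ℝ)
    extends IsCountKappaMetric ρ : Prop where
  k4 : K4Chains ρ

/-- Countable chain condition. -/
def CCCSpace (X : Type*) [TopologicalSpace X] : Prop :=
  ∀ 𝒪 : Set (Set X), (∀ U ∈ 𝒪, IsOpen U ∧ U.Nonempty) →
    𝒪.PairwiseDisjoint id → 𝒪.Countable

/-- Pseudocompactness: every continuous real-valued function is bounded. -/
def Pseudocompact (X : Type*) [TopologicalSpace X] : Prop :=
  ∀ f : X → ℝ, Continuous f → ∃ M, ∀ x, |f x| ≤ M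

/-- d-open maps. -/
def IsDOpen {Y : Type*} [TopologicalSpace X] [TopologicalSpace Y] (f : X → Y) : Prop :=
  ∀ U : Set X, IsOpen U → f '' U ⊆ interior (closure (f '' U))

/-- Q-admissible families of regular open sets with respect to ρ. -/
def QAdmissible [TopologicalSpace X] (ρ : X → Set X → ℝ) (P : Set (Set X)) : Prop :=
  (∀ V ∈ P, IsRegOpen V) ∧
  (∀ V ∈ P, ∀ q : ℚ,
    interior ((fun x => ρ x (closure V)) ⁻¹' Iic (q : ℝ)) ∈ P ∧
    interior ((fun x => ρ x (closure V)) ⁻¹' Ici (q : ℝ)) ∈ P) ∧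
  (∀ V ∈ P, interior Vᶜ ∈ P) ∧
  (∀ U ∈ P, ∀ V ∈ P, U ∩ V ∈ P ∧ interior (closure (U ∪ V)) ∈ P)

/-- The equivalence relation ∼_P. -/
def pSetoid (P : Set (Set X)) : Setoid X where
  r x y := ∀ V ∈ P, (x ∈ V ↔ y ∈ V)
  iseqv := ⟨fun _ _ _ => Iff.rfl, fun h V hV => (h V hV).symm,
    fun h1 h2 V hV => (h1 V hV).trans (h2 V hV)⟩

/-- The quotient X_P. -/
def XP (P : Set (Set X)) : Type _ := Quotient (pSetoid P)

/-- The quotient map q : X → X_P. -/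
def qP (P : Set (Set X)) : X → XP P := Quotient.mk (pSetoid P)

/-- The topology on X_P generated by images of members of P. -/
def topXP [TopologicalSpace X] (P : Set (Set X)) : TopologicalSpace (XP P) :=
  TopologicalSpace.generateFrom ((fun V => qP P '' V) '' P)

end Defs
/-- each member of a Q-admissible family is an increasing union of
members V_n with cl V_n ⊆ V_{n+1} ⊆ V. -/
theorem stmt7 {X : Type*} [TopologicalSpace X] (ρ : X → Set X → ℝ)
    (hρ : IsCountKappaMetric ρ) (P : Set (Set X)) (hP : QAdmissible ρ P)
    (V : Set X) (hV : V ∈ P) :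
    ∃ Vn : ℕ → Set X, (∀ n, Vn n ∈ P) ∧ (∀ n, IsRegOpen (Vn n)) ∧
      V = ⋃ n, Vn n ∧
      ∀ n, Vn n ⊆ closure (Vn n) ∧ closure (Vn n) ⊆ Vn (n + 1) ∧ Vn (n + 1) ⊆ V := by
  obtain ⟨hreg, hq, hcompl, -⟩ := hP
  have hVro : interior (closure V) = V := hreg V hV
  set W : Set X := interior Vᶜ with hWdef
  have hW : W ∈ P := hcompl V hV
  have hclW : closure W = Vᶜ := by
    rw [hWdef, interior_compl, closure_compl, hVro]
  have hrc : IsRegClosed (closure W) := by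
    unfold IsRegClosed
    rw [hclW, interior_compl, closure_compl, hVro]
  set f : X → ℝ := fun x => ρ x (closure W) with hfdef
  have hfcont : Continuous f := hρ.k3 (closure W) hrc
  have hmem : ∀ x, x ∈ V ↔ 0 < f x := by
    intro x
    have h0 : f x = 0 ↔ x ∈ closure W := hρ.k1 x (closure W) hrc
    have hxc : x ∈ closure W ↔ x ∉ V := by rw [hclW]; exact Iff.rfl
    have hnn : 0 ≤ f x := hρ.nonneg x (closure W) hrc
    constructor
    · intro hx
      rcases hnn.lt_or_eq with h | h
      · exact h
      · exact absurd (hxc.mp (h0.mp h.symm)) (not_not_intro hx)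
    · intro h
      by_contra hx
      have := h0.mpr (hxc.mpr hx)
      rw [this] at h
      exact lt_irrefl _ h
  set r : ℕ → ℝ := fun n => ((1 / (n + 1 : ℚ) : ℚ) : ℝ) with hrdef
  have hrval : ∀ n : ℕ, r n = 1 / (n + 1 : ℝ) := by
    intro n; simp [hrdef]
  have hrpos : ∀ n, 0 < r n := by
    intro n; rw [hrval]; positivity
  have hrmono : ∀ n : ℕ, r (n + 1) < r n := by
    intro n
    rw [hrval, hrval]
    apply one_div_lt_one_div_of_lt
    · positivity
    · push_cast; linarith
  set Vn : ℕ → Set X := fun n => interior (f ⁻¹' Ici (r n)) with hVndef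
  have hVnP : ∀ n, Vn n ∈ P := by
    intro n
    exact (hq W hW (1 / (n + 1 : ℚ))).2
  have hsub1 : ∀ n, f ⁻¹' Ioi (r n) ⊆ Vn n := by
    intro n
    exact interior_maximal (preimage_mono Ioi_subset_Ici_self)
      (isOpen_Ioi.preimage hfcont)
  have hsub2 : ∀ n, closure (Vn n) ⊆ f ⁻¹' Ici (r n) := by
    intro n
    exact closure_minimal interior_subset (isClosed_Ici.preimage hfcont)
  refine ⟨Vn, hVnP, fun n => hreg _ (hVnP n), ?_, fun n => ⟨subset_closure, ?_, ?_⟩⟩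
  · ext x
    simp only [mem_iUnion]
    constructor
    · intro hx
      obtain ⟨n, hn⟩ := exists_nat_one_div_lt ((hmem x).mp hx)
      refine ⟨n, hsub1 n ?_⟩
      rw [mem_preimage, mem_Ioi, hrval]
      exact hn
    · rintro ⟨n, hn⟩
      have h2 : x ∈ f ⁻¹' Ici (r n) := interior_subset hn
      exact (hmem x).mpr (lt_of_lt_of_le (hrpos n) h2)
  · intro x hx
    apply hsub1 (n + 1)
    exact lt_of_lt_of_le (hrmono n) (hsub2 n hx)
  · intro x hx
    have h2 : x ∈ f ⁻¹' Ici (r (n + 1)) := interior_subset hx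
    exact (hmem x).mpr (lt_of_lt_of_le (hrpos (n + 1)) h2)
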